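/- arXiv:2302.08816 — 2 statements merged into one kernel-verified Lean document; each statement's English description precedes it below -/
import Mathlib

section
/- Let E be a complex Hilbert space, F = E' its topological dual, and J : E → F a bounded linear operator satisfying ⟨J e¹, e²⟩_{F,E} = -conj(⟨J e², e¹⟩_{F,E}) for all e¹, e² ∈ E. Then the graph D = {(J e, e) : e ∈ E} ⊆ F × E equals its orthogonal companion with respect to the bond pairing ⟪(f¹,e¹),(f²,e²)⟫ := conj(⟨f¹,e²⟩) + ⟨f²,e¹⟩; that is, D is a Stokes-Dirac structure. -/
open scoped ComplexConjugate

/-- The graph of a bounded operator `J : E → F ≅ E` (dual identified with `E` via Riesz,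
so the duality pairing `⟨f, e⟩_{F,E}`, antilinear in `f` and linear in `e`, is the inner
product) satisfying the skew-symmetry-like identity is a Stokes-Dirac structure:
it equals its orthogonal companion w.r.t. the bond pairing
`⟪(f¹,e¹),(f²,e²)⟫ = conj ⟨f¹,e²⟩ + ⟨f²,e¹⟩`. -/
theorem stmt_0 {E : Type*} [NormedAddCommGroup E] [InnerProductSpace ℂ E] [CompleteSpace E]
    (J : E →L[ℂ] E)
    (hJ : ∀ e₁ e₂ : E, (inner ℂ (J e₁) e₂ : ℂ) = -conj (inner ℂ (J e₂) e₁ : ℂ)) :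
    {b : E × E | ∀ d ∈ {p : E × E | p.1 = J p.2},
        conj (inner ℂ b.1 d.2 : ℂ) + (inner ℂ d.1 b.2 : ℂ) = 0}
      = {p : E × E | p.1 = J p.2} := by
  ext b
  simp only [Set.mem_setOf_eq]
  constructor
  · intro hb
    have key : ∀ e : E, (inner ℂ (b.1 - J b.2) e : ℂ) = 0 := by
      intro e
      have h := hb (J e, e) rfl
      have h2 := hJ e b.2
      rw [inner_sub_left]
      have : conj (inner ℂ b.1 e : ℂ) = conj (inner ℂ (J b.2) e : ℂ) := by
        have : conj (inner ℂ b.1 e : ℂ) = - (inner ℂ (J e) b.2 : ℂ) := by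
          linear_combination h
        rw [this, h2]
        simp
      have h3 : (inner ℂ b.1 e : ℂ) = (inner ℂ (J b.2) e : ℂ) := by
        have := congrArg conj this
        simpa using this
      rw [h3]; ring
    have := key (b.1 - J b.2)
    rw [inner_self_eq_zero, sub_eq_zero] at this
    exact this
  · intro hb d hd
    rw [hb, hd, hJ d.2 b.2]
    ring
end

section
/- Let E be a complex Hilbert space, F = E', and J : E → F bounded with graph D = {(Je, e) : e ∈ E}. If (f, e) ∈ D^[⊥] (the orthogonal companion of D in the bond space), then f = J e. In particular D^[⊥] ⊆ D. -/
open scoped ComplexConjugate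

lemma stmt_3_aux {E : Type*} [NormedAddCommGroup E] [InnerProductSpace ℂ E] [CompleteSpace E]
    (J : E →L[ℂ] E)
    (hJ : ∀ e₁ e₂ : E, (inner ℂ (J e₁) e₂ : ℂ) = -conj (inner ℂ (J e₂) e₁ : ℂ))
    (f e : E)
    (hmem : ∀ e₂ : E, conj (inner ℂ f e₂ : ℂ) + (inner ℂ (J e₂) e : ℂ) = 0) :
    f = J e := by
  apply ext_inner_right ℂ
  intro v
  have h := hmem v
  have h2 : (inner ℂ (J v) e : ℂ) = -conj (inner ℂ (J e) v : ℂ) := hJ v e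
  rw [h2] at h
  have : conj (inner ℂ f v : ℂ) = conj (inner ℂ (J e) v : ℂ) := by linear_combination h
  exact star_injective this

/-- If `(f,e)` lies in the orthogonal companion of the graph `D = {(Je, e)}` of a bounded
operator `J` satisfying the skew-symmetry-like identity (dual identified with `E` via
Riesz, pairing = inner product), then `f = J e`; in particular `D^[⊥] ⊆ D`. -/
theorem stmt_3 {E : Type*} [NormedAddCommGroup E] [InnerProductSpace ℂ E] [CompleteSpace E]
    (J : E →L[ℂ] E)
    (hJ : ∀ e₁ e₂ : E, (inner ℂ (J e₁) e₂ : ℂ) = -conj (inner ℂ (J e₂) e₁ : ℂ))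
    (f e : E)
    (hmem : ∀ e₂ : E, conj (inner ℂ f e₂ : ℂ) + (inner ℂ (J e₂) e : ℂ) = 0) :
    f = J e ∧
      {b : E × E | ∀ d ∈ {p : E × E | p.1 = J p.2},
          conj (inner ℂ b.1 d.2 : ℂ) + (inner ℂ d.1 b.2 : ℂ) = 0}
        ⊆ {p : E × E | p.1 = J p.2} := by
  refine ⟨stmt_3_aux J hJ f e hmem, ?_⟩
  rintro ⟨b1, b2⟩ hb
  exact stmt_3_aux J hJ b1 b2 (fun e₂ => hb (J e₂, e₂) rfl)
end
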